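/- Set T := Kθ̄⊗θ + θK⊗θ̄ ∈ 𝒩⊗𝒩. Then T² = −2·(ρ⊗ρ), T³ = 0, ℳ = 1⊗1 + T + (1/2)T², ℳ is invertible with ℳ⁻¹ = 1⊗1 − T + (1/2)T², and for every natural number p one has ℳ^p = 1⊗1 + p·T + (p²/2)·T² = 1⊗1 + p·T − p²·(ρ⊗ρ). -/
import Mathlib

noncomputable section

open TensorProduct

/-- The quadratic form `q(x₀,x₁,x₂) = x₀²` on `ℝ³`. -/
def Nform : QuadraticForm ℝ (Fin 3 → ℝ) :=
  QuadraticMap.weightedSumSquares ℝ (fun i : Fin 3 => if i = 0 then (1 : ℝ) else 0)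

/-- The algebra `𝒩 = ℤ/2 ⋉ Λ*ℝ²`, realized as the Clifford algebra of `Nform`. -/
abbrev NA := CliffordAlgebra Nform

/-- The generator `K`. -/
def K : NA := CliffordAlgebra.ι Nform (Pi.single 0 1)

/-- The generator `θ`. -/
def θ : NA := CliffordAlgebra.ι Nform (Pi.single 1 1)

/-- The generator `θ̄`. -/
def θb : NA := CliffordAlgebra.ι Nform (Pi.single 2 1)

/-- `ρ := θ̄θ`. -/
def ρ : NA := θb * θ

/-- `T := Kθ̄⊗θ + θK⊗θ̄`. -/
def T : NA ⊗[ℝ] NA := (K * θb) ⊗ₜ[ℝ] θ + (θ * K) ⊗ₜ[ℝ] θb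

/-- The monodromy element `ℳ = 1⊗1 + Kθ̄⊗θ + θK⊗θ̄ − ρ⊗ρ`. -/
def Mono : NA ⊗[ℝ] NA := 1 + (K * θb) ⊗ₜ[ℝ] θ + (θ * K) ⊗ₜ[ℝ] θb - ρ ⊗ₜ[ℝ] ρ

lemma Nform_apply (v : Fin 3 → ℝ) : Nform v = v 0 * v 0 := by
  simp [Nform, QuadraticMap.weightedSumSquares_apply, Fin.sum_univ_three]

lemma Nform_polar (m n : Fin 3 → ℝ) : QuadraticMap.polar Nform m n = 2 * (m 0 * n 0) := by
  simp only [QuadraticMap.polar, Nform_apply, Pi.add_apply]; ring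

lemma hK2 : K * K = 1 := by
  rw [K, CliffordAlgebra.ι_sq_scalar, Nform_apply]; simp

lemma hθ2 : θ * θ = 0 := by
  rw [θ, CliffordAlgebra.ι_sq_scalar, Nform_apply]; simp

lemma hθb2 : θb * θb = 0 := by
  rw [θb, CliffordAlgebra.ι_sq_scalar, Nform_apply]; simp

lemma anticomm (i j : Fin 3) (h : i ≠ 0 ∨ j ≠ 0) :
    CliffordAlgebra.ι Nform (Pi.single i 1) * CliffordAlgebra.ι Nform (Pi.single j 1)
    = - (CliffordAlgebra.ι Nform (Pi.single j 1) * CliffordAlgebra.ι Nform (Pi.single i 1)) := by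
  have h2 := CliffordAlgebra.ι_mul_ι_add_swap (Q := Nform) (Pi.single i 1) (Pi.single j 1)
  rw [Nform_polar] at h2
  have hz : (Pi.single i (1:ℝ) : Fin 3 → ℝ) 0 * (Pi.single j (1:ℝ) : Fin 3 → ℝ) 0 = 0 := by
    rcases h with h | h
    · rw [Pi.single_eq_of_ne (Ne.symm h)]; ring
    · rw [Pi.single_eq_of_ne (Ne.symm h)]; ring
  rw [hz] at h2
  simp only [mul_zero, map_zero] at h2
  exact eq_neg_of_add_eq_zero_left (by simpa using h2)

lemma sθK : θ * K = -(K * θ) := by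
  simpa [K, θ, neg_neg] using (anticomm 1 0 (Or.inl (by decide)))
lemma sθbK : θb * K = -(K * θb) := by
  simpa [K, θb, neg_neg] using (anticomm 2 0 (Or.inl (by decide)))
lemma sθθb : θ * θb = -(θb * θ) := by
  simpa [θ, θb] using (anticomm 1 2 (Or.inl (by decide)))

-- assoc-compatible simp set
lemma sθK' (x : NA) : θ * (K * x) = -(K * (θ * x)) := by
  rw [← mul_assoc, sθK, neg_mul, mul_assoc]
lemma sθbK' (x : NA) : θb * (K * x) = -(K * (θb * x)) := by
  rw [← mul_assoc, sθbK, neg_mul, mul_assoc]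
lemma sθθb' (x : NA) : θ * (θb * x) = -(θb * (θ * x)) := by
  rw [← mul_assoc, sθθb, neg_mul, mul_assoc]
lemma hK2' (x : NA) : K * (K * x) = x := by rw [← mul_assoc, hK2, one_mul]
lemma hθ2' (x : NA) : θ * (θ * x) = 0 := by rw [← mul_assoc, hθ2, zero_mul]
lemma hθb2' (x : NA) : θb * (θb * x) = 0 := by rw [← mul_assoc, hθb2, zero_mul]

lemma f1 : (K * θb) * (θ * K) = ρ := by
  simp [ρ, mul_assoc, sθK, sθbK', sθθb', hK2, hK2', hθ2, hθ2', hθb2, hθb2']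
lemma f2 : (θ * K) * (K * θb) = -ρ := by
  simp [ρ, mul_assoc, sθK', sθbK', sθθb', hK2, hK2', hθ2, hθ2', hθb2, hθb2', sθθb]
lemma f3 : (K * θb) * (K * θb) = 0 := by
  simp [mul_assoc, sθbK', hK2', hθb2, hθb2']
lemma f4 : (θ * K) * (θ * K) = 0 := by
  simp [mul_assoc, sθK', hK2', hθ2, hθ2', sθK]
lemma g1 : θ * ρ = 0 := by
  simp [ρ, sθθb', hθ2, hθ2']
lemma g2 : θb * ρ = 0 := by
  simp [ρ, hθb2', hθb2]
lemma g3 : ρ * θ = 0 := by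
  simp [ρ, mul_assoc, hθ2]
lemma g4 : ρ * θb = 0 := by
  rw [ρ, mul_assoc, sθθb, mul_neg, ← mul_assoc, hθb2, zero_mul, neg_zero]
lemma g5 : ρ * ρ = 0 := by simp [ρ, mul_assoc, sθθb', hθ2, hθ2']

lemma hTT : T * T = (-2 : ℝ) • (ρ ⊗ₜ[ℝ] ρ) := by
  simp only [T, add_mul, mul_add, Algebra.TensorProduct.tmul_mul_tmul,
    f1, f2, f3, f4, hθ2, hθb2, sθθb, zero_tmul, tmul_zero, neg_tmul, tmul_neg,
    add_zero, zero_add, ρ]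
  module

lemma hTP : T * (ρ ⊗ₜ[ℝ] ρ) = 0 := by
  simp only [T, add_mul, Algebra.TensorProduct.tmul_mul_tmul, g1, g2, tmul_zero, add_zero]

lemma hPT : (ρ ⊗ₜ[ℝ] ρ) * T = 0 := by
  simp only [T, mul_add, Algebra.TensorProduct.tmul_mul_tmul, g3, g4, tmul_zero, add_zero]

lemma hPP : (ρ ⊗ₜ[ℝ] ρ) * (ρ ⊗ₜ[ℝ] ρ) = 0 := by
  simp only [Algebra.TensorProduct.tmul_mul_tmul, g5, tmul_zero]

lemma hM : Mono = 1 + T - ρ ⊗ₜ[ℝ] ρ := by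
  rw [Mono, T]; abel

lemma hhalf : (1 / 2 : ℝ) • (T * T) = -(ρ ⊗ₜ[ℝ] ρ) := by
  rw [hTT, smul_smul]; norm_num

lemma hpow : ∀ p : ℕ, Mono ^ p = 1 + (p : ℝ) • T - ((p : ℝ) ^ 2) • (ρ ⊗ₜ[ℝ] ρ) := by
  intro p
  induction p with
  | zero => simp
  | succ p ih =>
    rw [pow_succ, ih, hM]
    push_cast
    simp only [mul_add, add_mul, sub_mul, mul_sub, mul_one, one_mul,
      smul_mul_assoc, mul_smul_comm, hTT, hTP, hPT, hPP, smul_zero,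
      sub_zero, add_zero, smul_smul]
    module

/-- `T² = −2·(ρ⊗ρ)`, `T³ = 0`, `ℳ = 1⊗1 + T + (1/2)T²`, `ℳ` is invertible
with `ℳ⁻¹ = 1⊗1 − T + (1/2)T²`, and for every natural `p`,
`ℳ^p = 1⊗1 + p·T + (p²/2)·T² = 1⊗1 + p·T − p²·(ρ⊗ρ)`. -/
theorem stmt8 :
    T * T = (-2 : ℝ) • (ρ ⊗ₜ[ℝ] ρ) ∧
    T * T * T = 0 ∧
    Mono = 1 + T + (1 / 2 : ℝ) • (T * T) ∧
    Mono * (1 - T + (1 / 2 : ℝ) • (T * T)) = 1 ∧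
    (1 - T + (1 / 2 : ℝ) • (T * T)) * Mono = 1 ∧
    (∀ p : ℕ,
      Mono ^ p = 1 + (p : ℝ) • T + ((p : ℝ) ^ 2 / 2) • (T * T) ∧
      Mono ^ p = 1 + (p : ℝ) • T - ((p : ℝ) ^ 2) • (ρ ⊗ₜ[ℝ] ρ)) := by
  refine ⟨hTT, ?_, ?_, ?_, ?_, fun p => ⟨?_, hpow p⟩⟩
  · rw [hTT, smul_mul_assoc, hPT, smul_zero]
  · rw [hM, hhalf]; abel
  · rw [hM, hhalf]
    simp only [mul_add, add_mul, sub_mul, mul_sub, mul_one, one_mul,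
      mul_neg, neg_mul, hTT, hTP, hPT, hPP]
    module
  · rw [hM, hhalf]
    simp only [mul_add, add_mul, sub_mul, mul_sub, mul_one, one_mul,
      mul_neg, neg_mul, hTT, hTP, hPT, hPP]
    module
  · rw [hpow p, hTT, smul_smul]
    module
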